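/- Let A be the 2×2 matrix over F_q (q odd) with rows (1,1) and (1,-1), and let C₁ ⊆ F_q^n with generator matrix G₁ = (c₁,…,c_n) and C₂ ⊆ C₁ with generator matrix G₂ = (c₁',…,c_n'). Let C₂' be the code with generator matrix (c₁', -c₂', …, -c_n'). Then the matrix-product code C(A) = [C₁, C₂']·A ⊆ F_q^{2n} has the property that its punctured codes on S₁ = {1} ∪ {n+2,…,2n} and S₂ = {2,…,n+1} are each monomially equivalent to (subcodes of) C₁ + C₂; in particular, if C₁ and C₂ are (r,δ)-LRCs then C(A) is an (r,δ)-LRC. -/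

import Mathlib

/-- (r,δ)-locality of a code. -/
def IsLRC {ι F : Type*} [Fintype ι] [DecidableEq ι] [Zero F] [DecidableEq F]
    (C : Set (ι → F)) (r δ : ℕ) : Prop :=
  ∀ i : ι, ∃ S : Finset ι, i ∈ S ∧ S.card ≤ r + δ - 1 ∧
    ∀ x ∈ C, (∃ j ∈ S, x j ≠ 0) → δ ≤ (S.filter fun j => x j ≠ 0).card

/-- The matrix-product code [C₁, C₂']·A for A with rows (1,1), (1,-1), where
C₂' is C₂ with coordinates 2,…,n negated (generator matrix (c₁',-c₂',…,-c_n')).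
A codeword consists of the blocks c₁ + c₂' and c₁ - c₂'. -/
def MP16 {F : Type*} [Field F] {n : ℕ} (C1 C2 : Submodule F (Fin n → F)) :
    Set (Fin 2 × Fin n → F) :=
  {x | ∃ c1 ∈ C1, ∃ c2 ∈ C2, x = fun p =>
    if p.1 = 0 then c1 p.2 + (if p.2.val = 0 then 1 else -1) * c2 p.2
    else c1 p.2 - (if p.2.val = 0 then 1 else -1) * c2 p.2}


lemma lrc_pull {ι κ F : Type*} [Fintype ι] [DecidableEq ι] [Fintype κ] [DecidableEq κ]
    [Zero F] [DecidableEq F]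
    (C : Set (ι → F)) (D : Set (κ → F)) (r δ : ℕ) (hC : IsLRC C r δ)
    (i : κ) (φ : ι → κ) (hφ : Function.Injective φ) (a : ι) (ha : φ a = i)
    (hmem : ∀ x ∈ D, (fun b => x (φ b)) ∈ C) :
    ∃ S : Finset κ, i ∈ S ∧ S.card ≤ r + δ - 1 ∧
      ∀ x ∈ D, (∃ j ∈ S, x j ≠ 0) → δ ≤ (S.filter fun j => x j ≠ 0).card := by
  obtain ⟨S, haS, hcard, hrec⟩ := hC a
  refine ⟨S.image φ, Finset.mem_image.2 ⟨a, haS, ha⟩, ?_, ?_⟩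
  · exact le_trans (Finset.card_image_le) hcard
  · intro x hx hj
    obtain ⟨j, hjS, hjne⟩ := hj
    obtain ⟨b, hbS, rfl⟩ := Finset.mem_image.1 hjS
    have h1 := hrec _ (hmem x hx) ⟨b, hbS, hjne⟩
    have heq : ((S.image φ).filter fun j => x j ≠ 0) =
        (S.filter fun b => x (φ b) ≠ 0).image φ := by
      ext j
      simp only [Finset.mem_filter, Finset.mem_image]
      constructor
      · rintro ⟨⟨c, hc, rfl⟩, hne⟩; exact ⟨c, ⟨hc, hne⟩, rfl⟩
      · rintro ⟨c, ⟨hc, hne⟩, rfl⟩; exact ⟨⟨c, hc, rfl⟩, hne⟩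
    rw [heq, Finset.card_image_of_injective _ hφ]
    exact h1

theorem stmt_16 (p e q : ℕ) (hp : p.Prime) (hodd : Odd q) (he : 0 < e)
    (hq : q = p ^ e)
    {F : Type*} [Field F] [Fintype F] [DecidableEq F] (hF : Fintype.card F = q)
    (n : ℕ) (hn : 0 < n) (r δ : ℕ)
    (C1 C2 : Submodule F (Fin n → F)) (h21 : C2 ≤ C1) :
    (∀ x ∈ MP16 C1 C2,
      (fun a : Fin n => if a.val = 0 then x (0, a) else x (1, a)) ∈ C1 ⊔ C2 ∧
      (fun a : Fin n => if a.val = 0 then x (1, a) else x (0, a)) ∈ C1 ⊔ C2) ∧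
    (IsLRC (C1 : Set (Fin n → F)) r δ → IsLRC (C2 : Set (Fin n → F)) r δ →
      IsLRC (MP16 C1 C2) r δ) := by
  have key : ∀ x ∈ MP16 C1 C2,
      (fun a : Fin n => if a.val = 0 then x (0, a) else x (1, a)) ∈ C1 ⊔ C2 ∧
      (fun a : Fin n => if a.val = 0 then x (1, a) else x (0, a)) ∈ C1 ⊔ C2 := by
    rintro x ⟨c1, hc1, c2, hc2, rfl⟩
    constructor
    · have heq : (fun a : Fin n => if a.val = 0 then
          (fun p : Fin 2 × Fin n =>
            if p.1 = 0 then c1 p.2 + (if p.2.val = 0 then 1 else -1) * c2 p.2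
            else c1 p.2 - (if p.2.val = 0 then 1 else -1) * c2 p.2) (0, a)
          else (fun p : Fin 2 × Fin n =>
            if p.1 = 0 then c1 p.2 + (if p.2.val = 0 then 1 else -1) * c2 p.2
            else c1 p.2 - (if p.2.val = 0 then 1 else -1) * c2 p.2) (1, a)) = c1 + c2 := by
        funext a
        by_cases h : a.val = 0 <;> simp [h] <;> ring
      rw [heq]
      exact Submodule.add_mem _ (Submodule.mem_sup_left hc1) (Submodule.mem_sup_right hc2)
    · have heq : (fun a : Fin n => if a.val = 0 then
          (fun p : Fin 2 × Fin n =>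
            if p.1 = 0 then c1 p.2 + (if p.2.val = 0 then 1 else -1) * c2 p.2
            else c1 p.2 - (if p.2.val = 0 then 1 else -1) * c2 p.2) (1, a)
          else (fun p : Fin 2 × Fin n =>
            if p.1 = 0 then c1 p.2 + (if p.2.val = 0 then 1 else -1) * c2 p.2
            else c1 p.2 - (if p.2.val = 0 then 1 else -1) * c2 p.2) (0, a)) = c1 - c2 := by
        funext a
        by_cases h : a.val = 0 <;> simp [h] <;> ring
      rw [heq]
      exact Submodule.sub_mem _ (Submodule.mem_sup_left hc1) (Submodule.mem_sup_right hc2)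
  refine ⟨key, ?_⟩
  intro hL1 _hL2
  have hsup : C1 ⊔ C2 = C1 := sup_eq_left.2 h21
  set φ1 : Fin n → Fin 2 × Fin n := fun a => (if a.val = 0 then 0 else 1, a) with hφ1
  set φ2 : Fin n → Fin 2 × Fin n := fun a => (if a.val = 0 then 1 else 0, a) with hφ2
  have hinj1 : Function.Injective φ1 := fun a b h => by
    simpa [φ1] using congrArg Prod.snd h
  have hinj2 : Function.Injective φ2 := fun a b h => by
    simpa [φ2] using congrArg Prod.snd h
  have hmem1 : ∀ x ∈ MP16 C1 C2, (fun b => x (φ1 b)) ∈ (C1 : Set (Fin n → F)) := by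
    intro x hx
    have := (key x hx).1
    rw [hsup] at this
    rw [SetLike.mem_coe]
    convert this using 1
    funext a
    by_cases h : a.val = 0 <;> simp [φ1, h]
  have hmem2 : ∀ x ∈ MP16 C1 C2, (fun b => x (φ2 b)) ∈ (C1 : Set (Fin n → F)) := by
    intro x hx
    have := (key x hx).2
    rw [hsup] at this
    rw [SetLike.mem_coe]
    convert this using 1
    funext a
    by_cases h : a.val = 0 <;> simp [φ2, h]
  rintro ⟨b, a⟩
  by_cases hb : b = 0
  · by_cases ha : a.val = 0
    · exact lrc_pull _ _ r δ hL1 (b, a) φ1 hinj1 a (by simp [φ1, ha, hb]) hmem1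
    · exact lrc_pull _ _ r δ hL1 (b, a) φ2 hinj2 a (by simp [φ2, ha, hb]) hmem2
  · have hb1 : b = 1 := by omega
    by_cases ha : a.val = 0
    · exact lrc_pull _ _ r δ hL1 (b, a) φ2 hinj2 a (by simp [φ2, ha, hb1]) hmem2
    · exact lrc_pull _ _ r δ hL1 (b, a) φ1 hinj1 a (by simp [φ1, ha, hb1]) hmem1
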